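/- There is no orderly coin system of the form (1, 2, b, a, a+1, 2a) with 4 < b < a and a ≤ 2b: for any such parameters the value a + b is a counterexample. -/

import Mathlib

/-- The largest coin value in `C` that is at most `v` (or 0 if none). -/
def coinMax (C : List ℕ) (v : ℕ) : ℕ := (C.filter (· ≤ v)).foldr max 0

/-- Fuelled greedy coin count. -/
def grdAux (C : List ℕ) : ℕ → ℕ → ℕ
  | 0, _ => 0
  | fuel + 1, v =>
    let c := coinMax C v
    if v = 0 ∨ c = 0 then 0 else 1 + grdAux C fuel (v - c)

/-- Number of coins used by the greedy algorithm to represent `v` with coin system `C`. -/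
def grd (C : List ℕ) (v : ℕ) : ℕ := grdAux C v v

/-- The set of sizes of representations of `v` as nonnegative integer combinations of
the coin values in `C`. -/
def reprCosts (C : List ℕ) (v : ℕ) : Set ℕ :=
  {k | ∃ x : List ℕ, x.length = C.length ∧ (List.zipWith (· * ·) x C).sum = v ∧ x.sum = k}

/-- Minimum number of coins needed to represent `v` with coin system `C`. -/
noncomputable def opt (C : List ℕ) (v : ℕ) : ℕ := sInf (reprCosts C v)

/-- A coin system is orderly if greedy is optimal for every positive value. -/
def Orderly (C : List ℕ) : Prop := ∀ v : ℕ, 0 < v → grd C v = opt C v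

lemma cm_pos (a b v : ℕ) (hv : 1 ≤ v) :
    1 ≤ coinMax [1, 2, b, a, a + 1, 2 * a] v := by
  unfold coinMax
  rw [List.filter_cons]
  simp only [decide_eq_true_eq, if_pos hv, List.foldr_cons]
  exact le_max_left _ _

lemma cm1 (a b : ℕ) (hb : 4 < b) (hba : b < a) (hab : a ≤ 2 * b) :
    coinMax [1, 2, b, a, a + 1, 2 * a] (a + b) = a + 1 := by
  unfold coinMax
  simp only [List.filter_cons, List.filter_nil, decide_eq_true_eq,
    show (1 ≤ a + b) by omega, show (2 ≤ a + b) by omega,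
    show (b ≤ a + b) by omega, show (a ≤ a + b) by omega,
    show (a + 1 ≤ a + b) by omega, show ¬(2 * a ≤ a + b) by omega,
    if_true, if_false, List.foldr_cons, List.foldr_nil]
  omega

lemma cm2 (a b : ℕ) (hb : 4 < b) (hba : b < a) (hab : a ≤ 2 * b) :
    coinMax [1, 2, b, a, a + 1, 2 * a] (b - 1) = 2 := by
  unfold coinMax
  simp only [List.filter_cons, List.filter_nil, decide_eq_true_eq,
    show (1 ≤ b - 1) by omega, show (2 ≤ b - 1) by omega,
    show ¬(b ≤ b - 1) by omega, show ¬(a ≤ b - 1) by omega,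
    show ¬(a + 1 ≤ b - 1) by omega, show ¬(2 * a ≤ b - 1) by omega,
    if_true, if_false, List.foldr_cons, List.foldr_nil]
  omega

theorem stmt_15 (a b : ℕ) (hb : 4 < b) (hba : b < a) (hab : a ≤ 2 * b) :
    ¬ Orderly [1, 2, b, a, a + 1, 2 * a] ∧
    opt [1, 2, b, a, a + 1, 2 * a] (a + b) <
      grd [1, 2, b, a, a + 1, 2 * a] (a + b) := by
  set C : List ℕ := [1, 2, b, a, a + 1, 2 * a] with hC
  have hopt : opt C (a + b) ≤ 2 := by
    apply Nat.sInf_le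
    refine ⟨[0, 0, 1, 1, 0, 0], by simp [hC], ?_, by simp⟩
    simp [hC]
    omega
  have hgrd : 3 ≤ grd C (a + b) := by
    obtain ⟨g, hg⟩ : ∃ g, a + b = g + 1 + 1 + 1 := ⟨a + b - 3, by omega⟩
    unfold grd
    rw [hg]
    rw [show grdAux C (g + 1 + 1 + 1) (g + 1 + 1 + 1) = grdAux C (g + 1 + 1 + 1) (a + b) from by rw [hg]]
    rw [grdAux]
    simp only [show coinMax C (a + b) = a + 1 from cm1 a b hb hba hab, show ¬(a + b = 0 ∨ a + 1 = 0) by omega, if_false]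
    rw [show a + b - (a + 1) = b - 1 by omega]
    rw [grdAux]
    simp only [show coinMax C (b - 1) = 2 from cm2 a b hb hba hab, show ¬(b - 1 = 0 ∨ 2 = 0) by omega, if_false]
    rw [grdAux]
    have hpos : 1 ≤ coinMax C (b - 1 - 2) := cm_pos a b (b - 1 - 2) (by omega)
    have : ¬(b - 1 - 2 = 0 ∨ coinMax C (b - 1 - 2) = 0) := by
      push_neg; exact ⟨by omega, by omega⟩
    simp only [this, if_false]
    generalize grdAux C g (b - 1 - 2 - coinMax C (b - 1 - 2)) = n
    omega
  have hlt : opt C (a + b) < grd C (a + b) := by omega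
  refine ⟨fun h => ?_, hlt⟩
  have := h (a + b) (by omega)
  omega
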